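/- Let k-step canonical Markov approximation P^{[k]} of a stationary process P be the stationary Markov chain of order k with transition probabilities P^{[k]}(a | a_{−k}^{−1}) = P(a | a_{−k}^{−1}). Then the context tree of P^{[k]} is dominated by that of P: τ_{P^{[k]}} ≼ τ_P, i.e., every node of τ_{P^{[k]}} is a node of τ_P. -/

import Mathlib

open MeasureTheory

/-- The left shift on bi-infinite sequences. -/
def shift {A : Type*} (x : ℤ → A) : ℤ → A := fun i => x (i + 1)

/-- The cylinder set `{x : x₁ … x_{|w|} = w}`. -/
def cylSet {A : Type*} (w : List A) : Set (ℤ → A) :=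
  {x | ∀ j : Fin w.length, x ((j.1 + 1 : ℕ) : ℤ) = w.get j}

/-- The stationary probability `P(w)` of the string `w`. -/
noncomputable def cylP {A : Type*} [MeasurableSpace A] (P : Measure (ℤ → A))
    (w : List A) : ℝ :=
  (P (cylSet w)).toReal

/-- The conditional probability `P(a|w) = P(wa)/P(w)` of the next symbol `a` given a past
ending with the string `w`. -/
noncomputable def condP {A : Type*} [MeasurableSpace A] (P : Measure (ℤ → A))
    (a : A) (w : List A) : ℝ :=
  cylP P (w ++ [a]) / cylP P w

/-- The string `s` satisfies property 2 of the definition of a context: the conditional law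
of the next symbol given any (positive-probability) past ending with `s` equals `P(·|s)`. -/
def IsMemoryless {A : Type*} [MeasurableSpace A] (P : Measure (ℤ → A)) (s : List A) : Prop :=
  ∀ (u : List A) (a : A), 0 < cylP P (u ++ s) → condP P a (u ++ s) = condP P a s

/-- `w` is a node of the context tree `τ_P` of `P` (a suffix of some, possibly infinite,
context): `w` has positive probability and no proper suffix of `w` is memoryless. -/
def IsNode {A : Type*} [MeasurableSpace A] (P : Measure (ℤ → A)) (w : List A) : Prop :=
  0 < cylP P w ∧ ∀ s, s <:+ w → s ≠ w → ¬ IsMemoryless P s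

/-- `s` is a context of `P` (Definition 1): positive probability (or the empty string),
memoryless, and minimal with that property. -/
def IsContext {A : Type*} [MeasurableSpace A] (P : Measure (ℤ → A)) (s : List A) : Prop :=
  (s = [] ∨ 0 < cylP P s) ∧ IsMemoryless P s ∧ ∀ t, t <:+ s → t ≠ s → ¬ IsMemoryless P t

/-- `P` is a stationary ergodic probability measure on `A^ℤ`. -/
def StatErg {A : Type*} [MeasurableSpace A] (P : Measure (ℤ → A)) : Prop :=
  IsProbabilityMeasure P ∧ P.map shift = P ∧ Ergodic shift P

/-- `Ncount x u n` : the number of occurrences of the string `u` in the sample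
`x₁ … x_n`. -/
def Ncount {A : Type*} [DecidableEq A] (x : ℤ → A) (u : List A) (n : ℕ) : ℕ :=
  ((Finset.range (n + 1 - u.length)).filter
    (fun i => ∀ j : Fin u.length, x ((i + j.1 + 1 : ℕ) : ℤ) = u.get j)).card

/-- The empirical transition probability `p̂_n(a|u) = N_n(ua)/N_{n−1}(u)`. -/
noncomputable def phat {A : Type*} [DecidableEq A] (x : ℤ → A) (n : ℕ) (a : A)
    (u : List A) : ℝ :=
  (Ncount x (u ++ [a]) n : ℝ) / (Ncount x u (n - 1) : ℝ)

/-- The event `{d_n(X₁^n, Q) ≤ c log₂ n}` : for every string `w` occurring in the sample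
that is not a node of `τ_Q`, `N_{n−1}(w) · max_a |p̂_n(a|w) − Q(a|w)| ≤ c log₂ n`. -/
def dnLE {A : Type*} [DecidableEq A] [MeasurableSpace A] (Q : Measure (ℤ → A))
    (x : ℤ → A) (n : ℕ) (c : ℝ) : Prop :=
  ∀ w : List A, 0 < Ncount x w (n - 1) → ¬ IsNode Q w →
    ∀ a : A, (Ncount x w (n - 1) : ℝ) * |phat x n a w - condP Q a w| ≤ c * Real.logb 2 n


lemma measurable_shift {A : Type*} [MeasurableSpace A] : Measurable (shift (A := A)) :=
  measurable_pi_lambda _ fun i => measurable_pi_apply _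

lemma shift_iterate {A : Type*} (m : ℕ) (x : ℤ → A) (i : ℤ) :
    (shift^[m] x) i = x (i + m) := by
  induction m generalizing x with
  | zero => simp
  | succ n ih =>
    rw [Function.iterate_succ_apply, ih]
    simp only [shift]
    congr 1
    push_cast
    ring

lemma map_shift_iterate {A : Type*} [MeasurableSpace A] (Q : Measure (ℤ → A))
    (h : Q.map shift = Q) (m : ℕ) : Q.map (shift^[m]) = Q := by
  induction m with
  | zero => simp
  | succ n ih =>
    rw [Function.iterate_succ', ← Measure.map_map measurable_shift (measurable_shift.iterate n),
      ih, h]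

lemma cylP_suffix_le {A : Type*} [MeasurableSpace A] (Q : Measure (ℤ → A))
    [IsProbabilityMeasure Q] (hstat : Q.map shift = Q) {s w : List A} (hs : s <:+ w) :
    cylP Q w ≤ cylP Q s := by
  obtain ⟨u, rfl⟩ := hs
  have hsub : cylSet (u ++ s) ⊆ shift^[u.length] ⁻¹' cylSet s := by
    intro x hx j
    have hj : u.length + j.1 < (u ++ s).length := by
      simp only [List.length_append]; omega
    have := hx ⟨u.length + j.1, hj⟩
    simp only [Set.mem_preimage, cylSet, Set.mem_setOf_eq, shift_iterate]
    rw [show ((j.1 + 1 : ℕ) : ℤ) + (u.length : ℕ) = ((u.length + j.1 + 1 : ℕ) : ℤ) by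
      push_cast; ring]
    rw [this]
    simp [List.get_eq_getElem, List.getElem_append_right (Nat.le_add_right u.length j.1)]
  have h1 : Q (cylSet (u ++ s)) ≤ Q (shift^[u.length] ⁻¹' cylSet s) := measure_mono hsub
  have h2 : Q (shift^[u.length] ⁻¹' cylSet s) ≤ (Q.map (shift^[u.length])) (cylSet s) :=
    Measure.le_map_apply (measurable_shift.iterate u.length).aemeasurable _
  rw [map_shift_iterate Q hstat] at h2
  exact ENNReal.toReal_mono (measure_ne_top _ _) (h1.trans h2)

lemma memoryless_of_len_eq {A : Type*} [MeasurableSpace A]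
    (P Pk : Measure (ℤ → A)) (k : ℕ) [IsProbabilityMeasure Pk] (hPkstat : Pk.map shift = Pk)
    (hmarkov : ∀ v : List A, k ≤ v.length → 0 < cylP Pk v →
      ∀ a : A, condP Pk a v = condP P a (v.drop (v.length - k)))
    (s : List A) (hs : s.length = k) : IsMemoryless Pk s := by
  intro u a hpos
  have hpos' : 0 < cylP Pk s :=
    lt_of_lt_of_le hpos (cylP_suffix_le Pk hPkstat ⟨u, rfl⟩)
  have h1 := hmarkov (u ++ s) (by simp [List.length_append]; omega) hpos a
  have h2 := hmarkov s (by omega) hpos' a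
  rw [show (u ++ s).length - k = u.length by simp [List.length_append]; omega,
    List.drop_left] at h1
  rw [show s.length - k = 0 by omega, List.drop_zero] at h2
  rw [h1, h2]

/-- The context tree of the `k`-step canonical Markov approximation `P^{[k]}` of a
stationary process `P` (the stationary `k`-step Markov chain with the marginals of `P` up
to length `k` and transitions `P^{[k]}(a|a_{−k}^{−1}) = P(a|a_{−k}^{−1})`) is dominated by
the context tree of `P`: every node of `τ_{P^{[k]}}` is a node of `τ_P`. -/
theorem markov_approximation_tree_le {A : Type*} [Fintype A] [MeasurableSpace A]
    (P Pk : Measure (ℤ → A)) (k : ℕ)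
    (hPprob : IsProbabilityMeasure P) (hPstat : P.map shift = P)
    (hPkprob : IsProbabilityMeasure Pk) (hPkstat : Pk.map shift = Pk)
    (hmarg : ∀ v : List A, v.length ≤ k → cylP Pk v = cylP P v)
    (hmarkov : ∀ v : List A, k ≤ v.length → 0 < cylP Pk v →
      ∀ a : A, condP Pk a v = condP P a (v.drop (v.length - k))) :
    ∀ v : List A, IsNode Pk v → IsNode P v := by
  intro v hv
  obtain ⟨hvpos, hvmin⟩ := hv
  haveI := hPprob
  haveI := hPkprob
  have hlen : v.length ≤ k := by
    by_contra hlt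
    push_neg at hlt
    set s := v.drop (v.length - k) with hsdef
    have hslen : s.length = k := by simp [hsdef]; omega
    exact hvmin s (List.drop_suffix _ _)
      (fun h => by rw [h] at hslen; omega)
      (memoryless_of_len_eq P Pk k hPkstat hmarkov s hslen)
  have hPv : 0 < cylP P v := by rw [← hmarg v hlen]; exact hvpos
  refine ⟨hPv, fun s hs hne hmem => hvmin s hs hne ?_⟩
  have hslt : s.length < k := by
    have h1 : s.length ≤ v.length := hs.length_le
    have h2 : s.length ≠ v.length := fun h => hne (hs.eq_of_length h)
    omega
  intro u a hpos
  have hcs : condP Pk a s = condP P a s := by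
    unfold condP
    rw [hmarg (s ++ [a]) (by simp; omega), hmarg s (by omega)]
  rcases lt_or_ge (u.length + s.length) k with hshort | hlong
  · have hlen1 : (u ++ s).length ≤ k := by simp [List.length_append]; omega
    have hlen2 : ((u ++ s) ++ [a]).length ≤ k := by simp [List.length_append]; omega
    have hPus : 0 < cylP P (u ++ s) := by rw [← hmarg (u ++ s) hlen1]; exact hpos
    have : condP Pk a (u ++ s) = condP P a (u ++ s) := by
      unfold condP
      rw [hmarg ((u ++ s) ++ [a]) hlen2, hmarg (u ++ s) hlen1]
    rw [this, hmem u a hPus, hcs]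
  · set n := u.length + s.length - k with hndef
    have hn : n ≤ u.length := by omega
    have h1 := hmarkov (u ++ s) (by simp [List.length_append]; omega) hpos a
    rw [show (u ++ s).length - k = n by simp [List.length_append]; omega] at h1
    have hdrop : (u ++ s).drop n = u.drop n ++ s := List.drop_append_of_le_length hn
    rw [hdrop] at h1
    have hlenk : (u.drop n ++ s).length = k := by simp [List.length_append]; omega
    have hPkpos : 0 < cylP Pk (u.drop n ++ s) := by
      refine lt_of_lt_of_le hpos (cylP_suffix_le Pk hPkstat ?_)
      rw [← hdrop]; exact List.drop_suffix _ _
    have hPpos : 0 < cylP P (u.drop n ++ s) := by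
      rw [← hmarg _ hlenk.le]; exact hPkpos
    rw [h1, hmem (u.drop n) a hPpos, hcs]
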